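/- Let q be an odd prime, ρ = sqrt(12/((q+1)(q-1))), and p_1(x) = ρ(x - (q-1)/2). Then for every x ∈ {0, 1, ..., q-1}, p_1(W(x)) = -(ρ/(2q)) Σ_{v=0}^{q-1} g(v) cos((2v+1)π(2x+1/2)/q). -/

import Mathlib

open Finset Real

/-- The Williams transformation on natural-number representatives of `Z_q`:
`W(x) = 2x` if `0 ≤ x < q/2` and `W(x) = 2(q-x) - 1` if `q/2 ≤ x < q`. -/
def Wnat (q x : ℕ) : ℕ := if 2 * x < q then 2 * x else 2 * (q - x) - 1

/-- `g(v) = cos(π(v+1/2)/q) / (sin(π(v+1/2)/q))²`. -/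
noncomputable def gfun (q : ℕ) (v : ℤ) : ℝ :=
  Real.cos (π * ((v : ℝ) + 1 / 2) / q) / Real.sin (π * ((v : ℝ) + 1 / 2) / q) ^ 2

noncomputable def thetaA (q v : ℕ) : ℝ := π * ((v : ℝ) + 1 / 2) / q

lemma sin_thetaA_pos {q v : ℕ} (hq : 0 < q) (hv : v < q) : 0 < Real.sin (thetaA q v) := by
  apply Real.sin_pos_of_pos_of_lt_pi
  · unfold thetaA
    positivity
  · unfold thetaA
    rw [div_lt_iff₀ (by exact_mod_cast hq)]
    have : (v : ℝ) + 1/2 < q := by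
      have : (v : ℝ) + 1 ≤ q := by exact_mod_cast hv
      linarith
    nlinarith [Real.pi_pos]

lemma cos_orth (q m : ℕ) (hq : 0 < q) (hm : ¬ q ∣ m) :
    ∑ v ∈ Finset.range q, Real.cos (2 * (m : ℝ) * thetaA q v) = 0 := by
  have hqR : (q : ℝ) ≠ 0 := by positivity
  have harg : ∀ v : ℕ, 2 * (m : ℝ) * thetaA q v = π * m / q + v * (2 * π * m / q) := by
    intro v; unfold thetaA; field_simp; ring
  simp only [harg]
  -- complexify
  have hre : ∀ t : ℝ, Real.cos t = (Complex.exp (t * Complex.I)).re := by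
    intro t; rw [Complex.exp_mul_I]; simp [Complex.cos_ofReal_re]
  simp only [hre]
  rw [← Complex.re_sum]
  have hz : ∀ v : ℕ, Complex.exp (((π * m / q + v * (2 * π * m / q) : ℝ)) * Complex.I)
      = Complex.exp ((π * m / q : ℝ) * Complex.I) * Complex.exp ((2 * π * m / q : ℝ) * Complex.I) ^ v := by
    intro v
    rw [← Complex.exp_nat_mul, ← Complex.exp_add]
    congr 1
    push_cast
    ring
  simp only [hz]
  rw [← Finset.mul_sum]
  have hne : Complex.exp ((2 * π * m / q : ℝ) * Complex.I) ≠ 1 := by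
    intro h
    rw [Complex.exp_eq_one_iff] at h
    obtain ⟨n, hn⟩ := h
    have hI : ((2 * π * m / q : ℝ) : ℂ) = (n : ℂ) * (2 * π) := by
      have := hn
      rw [show (n : ℂ) * (2 * ↑π * Complex.I) = ((n : ℂ) * (2 * ↑π)) * Complex.I by ring] at this
      exact mul_right_cancel₀ Complex.I_ne_zero this
    have hR : (2 * π * m / q : ℝ) = n * (2 * π) := by exact_mod_cast hI
    have hmn : (m : ℝ) = n * q := by
      have hpi := Real.pi_ne_zero
      field_simp at hR
      have hpi2 : (0:ℝ) < π := Real.pi_pos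
      have : 2 * π * (m : ℝ) = 2 * π * ((n:ℝ) * q) := by rw [hR]; ring
      have := mul_left_cancel₀ (by positivity : (2 * π : ℝ) ≠ 0) this
      exact this
    apply hm
    have : (m : ℤ) = n * q := by exact_mod_cast hmn
    have : (q : ℤ) ∣ (m : ℤ) := ⟨n, by linarith⟩
    exact_mod_cast this
  rw [geom_sum_eq hne]
  have hpow : Complex.exp ((2 * π * m / q : ℝ) * Complex.I) ^ q = 1 := by
    rw [← Complex.exp_nat_mul]
    have : (q : ℂ) * (((2 * π * m / q : ℝ)) * Complex.I) = (m : ℤ) * (2 * π * Complex.I) := by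
      have hqC : (q : ℂ) ≠ 0 := by exact_mod_cast hqR
      push_cast
      field_simp
    rw [this, Complex.exp_int_mul_two_pi_mul_I]
  rw [hpow]
  simp

noncomputable def Tf (q n : ℕ) : ℝ :=
  ∑ v ∈ Finset.range q, Real.cos (2 * (n : ℝ) * thetaA q v) / Real.sin (thetaA q v) ^ 2

lemma Tf_rec (q n : ℕ) (hq : 0 < q) :
    Tf q (n + 2) = 2 * Tf q (n + 1) - Tf q n
      - 4 * ∑ v ∈ Finset.range q, Real.cos (2 * ((n + 1 : ℕ) : ℝ) * thetaA q v) := by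
  unfold Tf
  have hterm : ∀ v ∈ Finset.range q,
      Real.cos (2 * ((n + 2 : ℕ) : ℝ) * thetaA q v) / Real.sin (thetaA q v) ^ 2
        = 2 * (Real.cos (2 * ((n + 1 : ℕ) : ℝ) * thetaA q v) / Real.sin (thetaA q v) ^ 2)
          - Real.cos (2 * (n : ℝ) * thetaA q v) / Real.sin (thetaA q v) ^ 2
          - 4 * Real.cos (2 * ((n + 1 : ℕ) : ℝ) * thetaA q v) := by
    intro v hv
    have hs : Real.sin (thetaA q v) ≠ 0 :=
      ne_of_gt (sin_thetaA_pos hq (Finset.mem_range.mp hv))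
    set θ := thetaA q v
    have key : Real.cos (2 * ((n : ℝ) + 2) * θ) + Real.cos (2 * (n : ℝ) * θ)
        = 2 * Real.cos (2 * ((n : ℝ) + 1) * θ) * (1 - 2 * Real.sin θ ^ 2) := by
      rw [Real.cos_add_cos]
      rw [show (2 * ((n : ℝ) + 2) * θ + 2 * (n : ℝ) * θ) / 2 = 2 * ((n : ℝ) + 1) * θ by ring,
        show (2 * ((n : ℝ) + 2) * θ - 2 * (n : ℝ) * θ) / 2 = 2 * θ by ring]
      rw [Real.cos_two_mul, Real.cos_sq']
      ring
    push_cast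
    field_simp
    ring_nf at key ⊢
    linear_combination key
  rw [Finset.sum_congr rfl hterm]
  rw [Finset.sum_sub_distrib, Finset.sum_sub_distrib, ← Finset.mul_sum, ← Finset.mul_sum]

lemma Tf_zero (q : ℕ) : Tf q 0 = ∑ v ∈ Finset.range q, 1 / Real.sin (thetaA q v) ^ 2 := by
  unfold Tf
  simp

lemma Tf_one (q : ℕ) (hq : 0 < q) : Tf q 1 = Tf q 0 - 2 * q := by
  unfold Tf
  have hterm : ∀ v ∈ Finset.range q,
      Real.cos (2 * ((1 : ℕ) : ℝ) * thetaA q v) / Real.sin (thetaA q v) ^ 2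
        = Real.cos (2 * ((0 : ℕ) : ℝ) * thetaA q v) / Real.sin (thetaA q v) ^ 2 - 2 := by
    intro v hv
    have hs : Real.sin (thetaA q v) ≠ 0 :=
      ne_of_gt (sin_thetaA_pos hq (Finset.mem_range.mp hv))
    have : Real.cos (2 * ((1:ℕ) : ℝ) * thetaA q v) = 1 - 2 * Real.sin (thetaA q v) ^ 2 := by
      push_cast
      rw [show (2 : ℝ) * 1 * thetaA q v = 2 * thetaA q v by ring,
        Real.cos_two_mul, Real.cos_sq']
      ring
    rw [this]
    push_cast
    field_simp
    simp only [mul_zero, zero_mul, Real.cos_zero]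
  rw [Finset.sum_congr rfl hterm, Finset.sum_sub_distrib]
  simp [mul_comm]

lemma Tf_q (q : ℕ) (hq : 0 < q) : Tf q q = -Tf q 0 := by
  unfold Tf
  rw [← Finset.sum_neg_distrib]
  apply Finset.sum_congr rfl
  intro v hv
  have hqR : (q : ℝ) ≠ 0 := by positivity
  have : 2 * (q : ℝ) * thetaA q v = (v : ℝ) * (2 * π) + π := by
    unfold thetaA; field_simp
  rw [this]
  have : Real.cos ((v : ℝ) * (2 * π) + π) = -1 := by
    rw [Real.cos_add]
    simp [Real.cos_nat_mul_two_pi]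
  rw [this]
  simp
  ring

lemma cos_sum_q (q : ℕ) (hq : 0 < q) :
    ∑ v ∈ Finset.range q, Real.cos (2 * ((q : ℕ) : ℝ) * thetaA q v) = -(q : ℝ) := by
  have hqR : (q : ℝ) ≠ 0 := by positivity
  have hterm : ∀ v ∈ Finset.range q,
      Real.cos (2 * ((q : ℕ) : ℝ) * thetaA q v) = -1 := by
    intro v hv
    have : 2 * ((q : ℕ) : ℝ) * thetaA q v = (v : ℝ) * (2 * π) + π := by
      unfold thetaA; field_simp
    rw [this, Real.cos_add]
    simp [Real.cos_nat_mul_two_pi]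
  rw [Finset.sum_congr rfl hterm]
  simp

lemma Tf_lower (q : ℕ) (hq : 0 < q) : ∀ n, n ≤ q → Tf q n = Tf q 0 - 2 * q * n := by
  intro n
  induction n using Nat.strong_induction_on with
  | _ n ih =>
    match n with
    | 0 => intro _; simp
    | 1 => intro _; rw [Tf_one q hq]; push_cast; ring
    | (k+2) =>
      intro hk
      have h1 := ih (k+1) (by omega) (by omega)
      have h0 := ih k (by omega) (by omega)
      have horth := cos_orth q (k+1) hq (Nat.not_dvd_of_pos_of_lt (by omega) (by omega))
      have hr := Tf_rec q k hq
      rw [h1, h0, horth] at hr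
      rw [hr]
      push_cast
      ring

lemma Tf_zero_val (q : ℕ) (hq : 0 < q) : Tf q 0 = (q : ℝ) ^ 2 := by
  have h1 := Tf_lower q hq q le_rfl
  have h2 := Tf_q q hq
  have h3 : (q : ℝ) * (q : ℝ) = (q : ℝ) ^ 2 := (sq (q : ℝ)).symm
  rw [h2] at h1
  linarith

lemma Tf_low_val (q n : ℕ) (hq : 0 < q) (hn : n ≤ q) :
    Tf q n = (q : ℝ) ^ 2 - 2 * q * n := by
  rw [Tf_lower q hq n hn, Tf_zero_val q hq]

lemma Tf_high_val (q : ℕ) (h3 : 3 ≤ q) :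
    ∀ k, q + k ≤ 2 * q - 1 → Tf q (q + k) = -3 * (q : ℝ) ^ 2 + 2 * q * (q + k : ℕ) := by
  have hq : 0 < q := by omega
  intro k
  induction k using Nat.strong_induction_on with
  | _ k ih =>
    match k with
    | 0 =>
      intro _
      rw [Nat.add_zero, Tf_q q hq, Tf_zero_val q hq]
      push_cast
      ring
    | 1 =>
      intro hk
      have hr := Tf_rec q (q - 1) hq
      rw [show q - 1 + 2 = q + 1 from by omega, show q - 1 + 1 = q from by omega] at hr
      rw [cos_sum_q q hq, Tf_q q hq, Tf_zero_val q hq,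
        Tf_low_val q (q - 1) hq (by omega)] at hr
      rw [hr]
      have : ((q - 1 : ℕ) : ℝ) = (q : ℝ) - 1 := by
        rw [Nat.cast_sub (by omega)]; simp
      rw [this]
      push_cast
      ring
    | (k+2) =>
      intro hk
      have h1 := ih (k+1) (by omega) (by omega)
      have h0 := ih k (by omega) (by omega)
      have hnd : ¬ q ∣ (q + k + 1) := by
        intro h
        have h2 : q ∣ (q + k + 1 - q) := Nat.dvd_sub h (dvd_refl q)
        rw [show q + k + 1 - q = k + 1 from by omega] at h2
        have := Nat.le_of_dvd (by omega) h2
        omega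
      have horth := cos_orth q (q + k + 1) hq hnd
      have hr := Tf_rec q (q + k) hq
      rw [show q + k + 2 = q + (k + 2) from by omega, show q + k + 1 = q + (k + 1) from by omega] at hr
      rw [h1, h0] at hr
      rw [show q + (k + 1) = q + k + 1 from by omega] at hr
      rw [horth] at hr
      rw [hr]
      push_cast
      ring
lemma sum_eq_Tf (q x : ℕ) (hq : 0 < q) :
    ∑ v ∈ Finset.range q,
        gfun q v * Real.cos ((2 * (v : ℝ) + 1) * π * (2 * (x : ℝ) + 1 / 2) / q)
      = (Tf q (2 * x) + Tf q (2 * x + 1)) / 2 := by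
  unfold Tf
  rw [← Finset.sum_add_distrib, Finset.sum_div]
  apply Finset.sum_congr rfl
  intro v hv
  have hs : Real.sin (thetaA q v) ≠ 0 :=
    ne_of_gt (sin_thetaA_pos hq (Finset.mem_range.mp hv))
  have hqR : (q : ℝ) ≠ 0 := by positivity
  set θ := thetaA q v with hθ
  have hg : gfun q (v : ℤ) = Real.cos θ / Real.sin θ ^ 2 := by
    unfold gfun
    rw [hθ]; unfold thetaA
    push_cast
    ring_nf
  have hA : (2 * (v : ℝ) + 1) * π * (2 * (x : ℝ) + 1 / 2) / q = (4 * (x : ℝ) + 1) * θ := by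
    rw [hθ]; unfold thetaA
    field_simp
    ring
  have hc1 : 2 * ((2 * x : ℕ) : ℝ) * θ = (4 * (x : ℝ) + 1) * θ - θ := by push_cast; ring
  have hc2 : 2 * ((2 * x + 1 : ℕ) : ℝ) * θ = (4 * (x : ℝ) + 1) * θ + θ := by push_cast; ring
  rw [hg, hA, hc1, hc2, Real.cos_sub, Real.cos_add]
  field_simp
  ring

/-- For an odd prime `q`, with `ρ = √(12/((q+1)(q-1)))` and
`p₁(x) = ρ(x - (q-1)/2)`, for every `x ∈ {0, ..., q-1}`,
`p₁(W(x)) = -(ρ/(2q)) ∑_{v=0}^{q-1} g(v) cos((2v+1)π(2x+1/2)/q)`. -/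
theorem statement13 (q : ℕ) (hq : q.Prime) (hodd : Odd q) (x : ℕ) (hx : x < q) :
    Real.sqrt (12 / (((q : ℝ) + 1) * ((q : ℝ) - 1))) *
        ((Wnat q x : ℝ) - ((q : ℝ) - 1) / 2) =
      -(Real.sqrt (12 / (((q : ℝ) + 1) * ((q : ℝ) - 1))) / (2 * q)) *
        ∑ v ∈ Finset.range q,
          gfun q v * Real.cos ((2 * (v : ℝ) + 1) * π * (2 * (x : ℝ) + 1 / 2) / q) := by
  have h3 : 3 ≤ q := by
    obtain ⟨m, hm⟩ := hodd
    have := hq.two_le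
    omega
  have hq0 : 0 < q := by omega
  have hqR : (q : ℝ) ≠ 0 := by positivity
  set ρ := Real.sqrt (12 / (((q : ℝ) + 1) * ((q : ℝ) - 1))) with hρ
  rw [sum_eq_Tf q x hq0]
  by_cases hlt : 2 * x < q
  · rw [Tf_low_val q (2 * x) hq0 (by omega), Tf_low_val q (2 * x + 1) hq0 (by omega)]
    rw [Wnat, if_pos hlt]
    push_cast
    field_simp
    ring
  · have hgt : q < 2 * x := by
      obtain ⟨m, hm⟩ := hodd
      omega
    have hT1 := Tf_high_val q h3 (2 * x - q) (by omega)
    have hT2 := Tf_high_val q h3 (2 * x + 1 - q) (by omega)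
    rw [show q + (2 * x - q) = 2 * x from by omega] at hT1
    rw [show q + (2 * x + 1 - q) = 2 * x + 1 from by omega] at hT2
    rw [hT1, hT2, Wnat, if_neg hlt]
    have hw : ((2 * (q - x) - 1 : ℕ) : ℝ) = 2 * ((q : ℝ) - x) - 1 := by
      rw [Nat.cast_sub (by omega : 1 ≤ 2 * (q - x)), Nat.cast_mul,
        Nat.cast_sub (le_of_lt hx)]
      push_cast
      ring
    rw [hw]
    push_cast
    field_simp
    ring
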